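/- Let (Σ ∪ {∅}, d) be a metric space with magnitudes |l| = d(∅, l) ≥ 1 for all l ∈ Σ, let R ≥ 1, and let r be drawn uniformly at random from [R, 2R]. Let s_r(x) remove all letters of magnitude at most r. Then for any x, y ∈ Σⁿ, E[ed(s_r(x), s_r(y))] ≤ 5·ed(x, y). -/

import Mathlib

open scoped BigOperators

variable {α : Type*}

/-- `xb` is the expansion of `x` obtained by replacing the `i`-th letter of `x`
with `ks[i] ≥ 1` consecutive copies of itself (equivalently, by extending runs). -/
def IsExpansionWith (x : List α) (ks : List ℕ) (xb : List α) : Prop :=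
  ks.length = x.length ∧ (∀ k ∈ ks, 1 ≤ k) ∧
    xb = (x.zip ks).flatMap fun p => List.replicate p.2 p.1

/-- `xb` is an expansion of `x` (obtained by extending runs). -/
def IsExpansion (x xb : List α) : Prop := ∃ ks, IsExpansionWith x ks xb

/-- The cost of a correspondence: sum of pointwise distances. -/
def corrCost (d : α → α → ℝ) (xb yb : List α) : ℝ :=
  ((xb.zip yb).map fun p => d p.1 p.2).sum

/-- A correspondence between `x` and `y`: a pair of equal-length expansions. -/
def IsCorrespondence (x y xb yb : List α) : Prop :=
  IsExpansion x xb ∧ IsExpansion y yb ∧ xb.length = yb.length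

/-- Dynamic time warping distance: minimum cost of a correspondence. -/
noncomputable def dtw (d : α → α → ℝ) (x y : List α) : ℝ :=
  sInf {c | ∃ xb yb, IsCorrespondence x y xb yb ∧ c = corrCost d xb yb}

/-- The maximal runs of equal letters of a list. -/
def runsOf [DecidableEq α] (x : List α) : List (List α) := x.splitBy (· == ·)

/-- Number of runs. -/
def numRuns [DecidableEq α] (x : List α) : ℕ := (runsOf x).length

/-- Length of the final run. -/
def lastRunLen [DecidableEq α] (x : List α) : ℕ := ((runsOf x).getLastD []).length

/-- Length of the `i`-th run (0-indexed). -/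
def runLen [DecidableEq α] (x : List α) (i : ℕ) : ℕ := ((runsOf x).getD i []).length

/-- The letter populating the `i`-th run (0-indexed). -/
def runLetter [DecidableEq α] [Inhabited α] (x : List α) (i : ℕ) : α :=
  ((runsOf x).getD i []).headI

/-- The concatenation of the first `k` runs of `x`. -/
def firstRuns [DecidableEq α] (k : ℕ) (x : List α) : List α := ((runsOf x).take k).flatten

/-- The prefix of `y` consisting of its first `ry` runs, up through the `oy`-th
letter of the `ry`-th run (runs are 1-indexed here). -/
def runPrefix [DecidableEq α] (ry oy : ℕ) (y : List α) : List α :=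
  firstRuns (ry - 1) y ++ ((runsOf y).getD (ry - 1) []).take oy

/-- The subproblem `SP(x, y, rx, ry, oy)`: the minimum cost of a correspondence
between the first `rx` runs of `x` and the prefix of `y` ending at the `oy`-th
letter of its `ry`-th run, under the constraint that the final (`ry`-th) run of
the `y`-prefix is not extended; `⊤` if no such correspondence exists. -/
noncomputable def SP [DecidableEq α] (d : α → α → ℝ) (x y : List α) (rx ry oy : ℕ) : EReal :=
  sInf ((fun p : List α × List α => ((corrCost d p.1 p.2 : ℝ) : EReal)) ''
    {p | IsCorrespondence (firstRuns rx x) (runPrefix ry oy y) p.1 p.2 ∧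
         (0 < oy → lastRunLen p.2 = oy)})

/-- Generalized edit distance over a metric with null character `nul`:
insertion/deletion of `l` costs `d nul l`, substitution of `l` by `l'` costs `d l l'`. -/
noncomputable def ged (d : α → α → ℝ) (nul : α) : List α → List α → ℝ
  | [], [] => 0
  | [], b :: ys => d nul b + ged d nul [] ys
  | a :: xs, [] => d nul a + ged d nul xs []
  | a :: xs, b :: ys =>
      min (d a b + ged d nul xs ys)
        (min (d nul a + ged d nul xs (b :: ys)) (d nul b + ged d nul (a :: xs) ys))
  termination_by x y => x.length + y.length

/-- Simple (Hamming/Levenshtein) edit distance: unit-cost insertions, deletions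
and substitutions. -/
def edH [DecidableEq α] : List α → List α → ℕ
  | [], ys => ys.length
  | xs, [] => xs.length
  | a :: xs, b :: ys =>
      min ((if a = b then 0 else 1) + edH xs ys)
        (min (1 + edH xs (b :: ys)) (1 + edH (a :: xs) ys))
  termination_by x y => x.length + y.length

/-- Simple edit distance with only unit-cost insertions and deletions. -/
def edS [DecidableEq α] : List α → List α → ℕ
  | [], ys => ys.length
  | xs, [] => xs.length
  | a :: xs, b :: ys =>
      if a = b then
        min (edS xs ys) (min (1 + edS xs (b :: ys)) (1 + edS (a :: xs) ys))
      else
        min (1 + edS xs (b :: ys)) (1 + edS (a :: xs) ys)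
  termination_by x y => x.length + y.length

/-- The padded string `p(x) = ∅ x₁ ∅ x₂ ∅ ⋯ xₙ ∅`. -/
def pad (nul : α) (x : List α) : List α := nul :: x.flatMap fun a => [a, nul]

/-- The `r`-simplification for edit distance: remove all letters of magnitude at most `r`. -/
noncomputable def sEd [MetricSpace α] (nul : α) (r : ℝ) (x : List α) : List α :=
  x.filter fun l => decide (r < dist nul l)

section AuxStmt13
open MeasureTheory

private lemma two_list_induction' {P : List α → List α → Prop}
    (h1 : P [] [])
    (h2 : ∀ b ys, P [] ys → P [] (b :: ys))
    (h3 : ∀ a xs, P xs [] → P (a :: xs) [])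
    (h4 : ∀ a xs b ys, P xs ys → P xs (b :: ys) → P (a :: xs) ys → P (a :: xs) (b :: ys)) :
    ∀ x y, P x y := by
  have key : ∀ n x y, x.length + y.length = n → P x y := by
    intro n
    induction n using Nat.strong_induction_on with
    | _ n ih =>
      intro x y hn
      match x, y with
      | [], [] => exact h1
      | [], b :: ys => exact h2 b ys (ih (ys.length) (by simp at hn; omega) [] ys (by simp))
      | a :: xs, [] => exact h3 a xs (ih (xs.length) (by simp at hn; omega) xs [] (by simp))
      | a :: xs, b :: ys =>
        exact h4 a xs b ys
          (ih (xs.length + ys.length) (by simp at hn ⊢; omega) xs ys rfl)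
          (ih (xs.length + (b::ys).length) (by simp at hn ⊢; omega) xs (b::ys) rfl)
          (ih ((a::xs).length + ys.length) (by simp at hn ⊢; omega) (a::xs) ys rfl)
  exact fun x y => key _ x y rfl

variable [MetricSpace α]

private lemma ged_nil_nil (nul : α) : ged dist nul ([] : List α) [] = 0 := by simp [ged]

private lemma ged_nil_cons (nul b : α) (ys : List α) :
    ged dist nul [] (b :: ys) = dist nul b + ged dist nul [] ys := by simp [ged]

private lemma ged_cons_nil (nul a : α) (xs : List α) :
    ged dist nul (a :: xs) [] = dist nul a + ged dist nul xs [] := by simp [ged]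

private lemma ged_cons_cons (nul a b : α) (xs ys : List α) :
    ged dist nul (a :: xs) (b :: ys) =
      min (dist a b + ged dist nul xs ys)
        (min (dist nul a + ged dist nul xs (b :: ys))
          (dist nul b + ged dist nul (a :: xs) ys)) := by
  simp [ged]

private lemma ged_nonneg (nul : α) : ∀ x y : List α, 0 ≤ ged dist nul x y := by
  apply two_list_induction'
  · simp [ged_nil_nil]
  · intro b ys ih; rw [ged_nil_cons]; exact add_nonneg dist_nonneg ih
  · intro a xs ih; rw [ged_cons_nil]; exact add_nonneg dist_nonneg ih
  · intro a xs b ys ih1 ih2 ih3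
    rw [ged_cons_cons]
    exact le_min (add_nonneg dist_nonneg ih1)
      (le_min (add_nonneg dist_nonneg ih2) (add_nonneg dist_nonneg ih3))

private lemma ged_le_sub (nul a b : α) (xs ys : List α) :
    ged dist nul (a :: xs) (b :: ys) ≤ dist a b + ged dist nul xs ys := by
  rw [ged_cons_cons]; exact min_le_left _ _

private lemma ged_le_delL (nul a : α) (xs : List α) :
    ∀ ys, ged dist nul (a :: xs) ys ≤ dist nul a + ged dist nul xs ys
  | [] => (ged_cons_nil nul a xs).le
  | b :: ys => by rw [ged_cons_cons]; exact (min_le_right _ _).trans (min_le_left _ _)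

private lemma ged_le_delR (nul b : α) (ys : List α) :
    ∀ xs, ged dist nul xs (b :: ys) ≤ dist nul b + ged dist nul xs ys
  | [] => (ged_nil_cons nul b ys).le
  | a :: xs => by rw [ged_cons_cons]; exact (min_le_right _ _).trans (min_le_right _ _)

private lemma sEd_nil (nul : α) (r : ℝ) : sEd nul r ([] : List α) = [] := rfl

private lemma sEd_cons (nul : α) (r : ℝ) (a : α) (xs : List α) :
    sEd nul r (a :: xs) = if r < dist nul a then a :: sEd nul r xs else sEd nul r xs := by
  by_cases h : r < dist nul a <;> simp [sEd, List.filter_cons, h]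

noncomputable def delC (nul a : α) (r : ℝ) : ℝ := if r < dist nul a then dist nul a else 0

noncomputable def ggC (nul a b : α) (r : ℝ) : ℝ :=
  if r < dist nul a then (if r < dist nul b then dist a b else dist nul a)
  else (if r < dist nul b then dist nul b else 0)

noncomputable def hB (nul : α) (r : ℝ) : List α → List α → ℝ
  | [], [] => 0
  | [], b :: ys => delC nul b r + hB nul r [] ys
  | a :: xs, [] => delC nul a r + hB nul r xs []
  | a :: xs, b :: ys =>
      min (ggC nul a b r + hB nul r xs ys)
        (min (delC nul a r + hB nul r xs (b :: ys)) (delC nul b r + hB nul r (a :: xs) ys))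
  termination_by x y => x.length + y.length

private lemma hB_nil_nil (nul : α) (r : ℝ) : hB nul r ([] : List α) [] = 0 := by simp [hB]

private lemma hB_nil_cons (nul : α) (r : ℝ) (b : α) (ys : List α) :
    hB nul r [] (b :: ys) = delC nul b r + hB nul r [] ys := by simp [hB]

private lemma hB_cons_nil (nul : α) (r : ℝ) (a : α) (xs : List α) :
    hB nul r (a :: xs) [] = delC nul a r + hB nul r xs [] := by simp [hB]

private lemma hB_cons_cons (nul : α) (r : ℝ) (a b : α) (xs ys : List α) :
    hB nul r (a :: xs) (b :: ys) =
      min (ggC nul a b r + hB nul r xs ys)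
        (min (delC nul a r + hB nul r xs (b :: ys))
          (delC nul b r + hB nul r (a :: xs) ys)) := by
  simp [hB]

private lemma delC_nonneg (nul a : α) (r : ℝ) : 0 ≤ delC nul a r := by
  unfold delC; split_ifs; exacts [dist_nonneg, le_refl 0]

/-- Pointwise bound: `ged` of simplifications is at most `hB`. -/
private lemma ged_sEd_le_hB (nul : α) (r : ℝ) :
    ∀ x y : List α, ged dist nul (sEd nul r x) (sEd nul r y) ≤ hB nul r x y := by
  apply two_list_induction'
  · rw [sEd_nil, ged_nil_nil, hB_nil_nil]
  · intro b ys ih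
    rw [sEd_nil] at *
    rw [sEd_cons, hB_nil_cons]
    by_cases h : r < dist nul b
    · rw [if_pos h, ged_nil_cons]
      have : delC nul b r = dist nul b := if_pos h
      linarith
    · rw [if_neg h]
      have : delC nul b r = 0 := if_neg h
      linarith
  · intro a xs ih
    rw [sEd_nil] at *
    rw [sEd_cons, hB_cons_nil]
    by_cases h : r < dist nul a
    · rw [if_pos h, ged_cons_nil]
      have : delC nul a r = dist nul a := if_pos h
      linarith
    · rw [if_neg h]
      have : delC nul a r = 0 := if_neg h
      linarith
  · intro a xs b ys ih1 ih2 ih3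
    rw [hB_cons_cons]
    refine le_min ?_ (le_min ?_ ?_)
    · -- substitution option
      rw [sEd_cons, sEd_cons]
      by_cases ha : r < dist nul a <;> by_cases hb : r < dist nul b
      · rw [if_pos ha, if_pos hb]
        have hg : ggC nul a b r = dist a b := by unfold ggC; rw [if_pos ha, if_pos hb]
        have := ged_le_sub nul a b (sEd nul r xs) (sEd nul r ys)
        linarith
      · rw [if_pos ha, if_neg hb]
        have hg : ggC nul a b r = dist nul a := by unfold ggC; rw [if_pos ha, if_neg hb]
        have := ged_le_delL nul a (sEd nul r xs) (sEd nul r ys)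
        linarith
      · rw [if_neg ha, if_pos hb]
        have hg : ggC nul a b r = dist nul b := by unfold ggC; rw [if_neg ha, if_pos hb]
        have := ged_le_delR nul b (sEd nul r ys) (sEd nul r xs)
        linarith
      · rw [if_neg ha, if_neg hb]
        have hg : ggC nul a b r = 0 := by unfold ggC; rw [if_neg ha, if_neg hb]
        linarith
    · -- delete a option
      rw [sEd_cons]
      by_cases ha : r < dist nul a
      · rw [if_pos ha]
        have hg : delC nul a r = dist nul a := if_pos ha
        have := ged_le_delL nul a (sEd nul r xs) (sEd nul r (b :: ys))
        linarith
      · rw [if_neg ha]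
        have hg : delC nul a r = 0 := if_neg ha
        linarith
    · -- delete b option
      conv_lhs => rw [sEd_cons nul r b ys]
      by_cases hb : r < dist nul b
      · rw [if_pos hb]
        have hg : delC nul b r = dist nul b := if_pos hb
        have := ged_le_delR nul b (sEd nul r ys) (sEd nul r (a :: xs))
        linarith
      · rw [if_neg hb]
        have hg : delC nul b r = 0 := if_neg hb
        linarith

private lemma intervalIntegrable_min' {f g : ℝ → ℝ} {p q : ℝ}
    (hf : IntervalIntegrable f volume p q) (hg : IntervalIntegrable g volume p q) :
    IntervalIntegrable (fun r => min (f r) (g r)) volume p q := by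
  have hfun : (fun r => min (f r) (g r)) = fun r => (f r + g r - |f r - g r|) / 2 := by
    funext r
    rcases le_total (f r) (g r) with h | h
    · rw [min_eq_left h, abs_of_nonpos (by linarith)]; ring
    · rw [min_eq_right h, abs_of_nonneg (by linarith)]; ring
  rw [hfun]
  exact ((hf.add hg).sub (hf.sub hg).abs).div_const 2

private lemma vol_uIoc_lt_top (p q : ℝ) : volume (Set.uIoc p q) < ⊤ := by
  rw [Set.uIoc]; exact measure_Ioc_lt_top

private lemma intble_ite_lt (c v p q : ℝ) :
    IntervalIntegrable (fun r => if r < c then v else 0) volume p q := by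
  have hfun : (fun r : ℝ => if r < c then v else 0) = (Set.Iio c).indicator fun _ => v := by
    funext r; by_cases h : r < c <;> simp [Set.indicator, h]
  rw [hfun, intervalIntegrable_iff]
  exact ((integrableOn_const_iff (C := v)).mpr (Or.inr (vol_uIoc_lt_top p q))).indicator measurableSet_Iio

private lemma intble_ite_icc (A B v p q : ℝ) :
    IntervalIntegrable (fun r => if B ≤ r ∧ r ≤ A then v else 0) volume p q := by
  have hfun : (fun r : ℝ => if B ≤ r ∧ r ≤ A then v else 0)
      = (Set.Icc B A).indicator fun _ => v := by
    funext r; by_cases h : B ≤ r ∧ r ≤ A <;> simp [Set.indicator, Set.mem_Icc, h]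
  rw [hfun, intervalIntegrable_iff]
  exact ((integrableOn_const_iff (C := v)).mpr (Or.inr (vol_uIoc_lt_top p q))).indicator measurableSet_Icc

private lemma intble_delC (nul a : α) (p q : ℝ) :
    IntervalIntegrable (delC nul a) volume p q := intble_ite_lt _ _ p q

private lemma measurable_ggC (nul a b : α) : Measurable (ggC nul a b) := by
  unfold ggC
  refine Measurable.ite (measurableSet_lt measurable_id measurable_const) ?_ ?_ <;>
    exact Measurable.ite (measurableSet_lt measurable_id measurable_const)
      measurable_const measurable_const

private lemma intble_ggC (nul a b : α) (p q : ℝ) :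
    IntervalIntegrable (ggC nul a b) volume p q := by
  have h1 : (0:ℝ) ≤ dist a b := dist_nonneg
  have h2 : (0:ℝ) ≤ dist nul a := dist_nonneg
  have h3 : (0:ℝ) ≤ dist nul b := dist_nonneg
  refine IntervalIntegrable.mono_fun
    (intervalIntegrable_const (c := dist a b + dist nul a + dist nul b))
    (measurable_ggC nul a b).aestronglyMeasurable ?_
  filter_upwards with r
  simp only [Real.norm_eq_abs]
  unfold ggC
  split_ifs <;> rw [abs_of_nonneg (by linarith), abs_of_nonneg (by linarith)] <;> linarith

private lemma intble_hB (nul : α) (p q : ℝ) :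
    ∀ x y : List α, IntervalIntegrable (fun r => hB nul r x y) volume p q := by
  apply two_list_induction'
  · simp only [hB_nil_nil]; exact intervalIntegrable_const
  · intro b ys ih; simp only [hB_nil_cons]; exact (intble_delC nul b p q).add ih
  · intro a xs ih; simp only [hB_cons_nil]; exact (intble_delC nul a p q).add ih
  · intro a xs b ys ih1 ih2 ih3
    simp only [hB_cons_cons]
    exact intervalIntegrable_min' ((intble_ggC nul a b p q).add ih1)
      (intervalIntegrable_min' ((intble_delC nul a p q).add ih2)
        ((intble_delC nul b p q).add ih3))

private lemma integral_delC_le (nul a : α) {R : ℝ} (hR : 0 ≤ R) :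
    (∫ r in R..(2*R), delC nul a r) ≤ R * dist nul a := by
  have hRle : R ≤ 2*R := by linarith
  have hmono : (∫ r in R..(2*R), delC nul a r) ≤ ∫ _r in R..(2*R), dist nul a :=
    intervalIntegral.integral_mono_on hRle (intble_delC nul a _ _) intervalIntegrable_const
      (fun r _ => by
        unfold delC; split_ifs
        · exact le_refl _
        · exact dist_nonneg)
  rw [intervalIntegral.integral_const, smul_eq_mul] at hmono
  calc (∫ r in R..(2*R), delC nul a r) ≤ (2*R - R) * dist nul a := hmono
    _ = R * dist nul a := by ring

private lemma integral_ite_icc (A B v p q : ℝ) (hpq : p ≤ q) :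
    (∫ r in p..q, if B ≤ r ∧ r ≤ A then v else 0)
      = (volume (Set.Ioc p q ∩ Set.Icc B A)).toReal * v := by
  have hfun : (fun r : ℝ => if B ≤ r ∧ r ≤ A then v else 0)
      = (Set.Icc B A).indicator fun _ => v := by
    funext r; by_cases h : B ≤ r ∧ r ≤ A <;> simp [Set.indicator, Set.mem_Icc, h]
  rw [hfun, intervalIntegral.integral_of_le hpq,
    setIntegral_indicator measurableSet_Icc, setIntegral_const, smul_eq_mul]
  rfl

private lemma vol_piece_le {A B R d : ℝ} (hR : 0 < R) (hd : 0 ≤ d) (hAB : A - B ≤ d) :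
    A * (volume (Set.Ioc R (2*R) ∩ Set.Icc B A)).toReal ≤ 3 * (R * d) := by
  set m := (volume (Set.Ioc R (2*R) ∩ Set.Icc B A)).toReal with hm
  have hm0 : 0 ≤ m := ENNReal.toReal_nonneg
  have hmR : m ≤ R := by
    have h1 : volume (Set.Ioc R (2*R) ∩ Set.Icc B A) ≤ volume (Set.Ioc R (2*R)) :=
      measure_mono Set.inter_subset_left
    have h2 : volume (Set.Ioc R (2*R)) = ENNReal.ofReal R := by
      rw [Real.volume_Ioc]; ring_nf
    calc m ≤ (volume (Set.Ioc R (2*R))).toReal :=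
          ENNReal.toReal_mono (by rw [h2]; exact ENNReal.ofReal_ne_top) h1
      _ = R := by rw [h2, ENNReal.toReal_ofReal hR.le]
  have hmd : m ≤ d := by
    have h1 : volume (Set.Ioc R (2*R) ∩ Set.Icc B A) ≤ volume (Set.Icc B A) :=
      measure_mono Set.inter_subset_right
    rw [Real.volume_Icc] at h1
    calc m ≤ (ENNReal.ofReal (A - B)).toReal :=
          ENNReal.toReal_mono ENNReal.ofReal_ne_top h1
      _ = max (A - B) 0 := ENNReal.toReal_ofReal'
      _ ≤ d := max_le hAB hd
  rcases eq_or_lt_of_le hm0 with h0 | h0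
  · rw [← h0, mul_zero]; positivity
  · have hB2 : B ≤ 2*R := by
      by_contra hB2
      push_neg at hB2
      have hempty : Set.Ioc R (2*R) ∩ Set.Icc B A = ∅ := by
        ext r
        simp only [Set.mem_inter_iff, Set.mem_Ioc, Set.mem_Icc, Set.mem_empty_iff_false,
          iff_false, not_and, and_imp]
        intro _ h2 h3
        linarith
      rw [hm, hempty] at h0
      simp at h0
    have hA : A ≤ 2*R + d := by linarith
    have e1 : A * m ≤ (2*R + d) * m := mul_le_mul_of_nonneg_right hA hm0
    have e2 : (2*R) * m ≤ (2*R) * d := mul_le_mul_of_nonneg_left hmd (by linarith)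
    have e3 : d * m ≤ d * R := mul_le_mul_of_nonneg_left hmR hd
    nlinarith

private lemma vol_piece_zero (p q : ℝ) {A B : ℝ} (h : B ≤ A) :
    (volume (Set.Ioc p q ∩ Set.Icc A B)).toReal = 0 := by
  have h1 : volume (Set.Ioc p q ∩ Set.Icc A B) ≤ volume (Set.Icc A B) :=
    measure_mono Set.inter_subset_right
  rw [Real.volume_Icc, ENNReal.ofReal_eq_zero.mpr (by linarith)] at h1
  rw [le_zero_iff.mp h1]
  rfl

private lemma integral_ggC_le (nul a b : α) {R : ℝ} (hR : 0 < R) :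
    (∫ r in R..(2*R), ggC nul a b r) ≤ 4 * (R * dist a b) := by
  set A := dist nul a with hA
  set B := dist nul b with hBdef
  set d := dist a b with hd
  have hd0 : (0:ℝ) ≤ d := dist_nonneg
  have hA0 : (0:ℝ) ≤ A := dist_nonneg
  have hB0 : (0:ℝ) ≤ B := dist_nonneg
  have habs : |A - B| ≤ d := by
    rw [hA, hBdef, hd, dist_comm nul a, dist_comm nul b]
    exact abs_dist_sub_le a b nul
  have hRle : R ≤ 2*R := by linarith
  have hpt : ∀ r ∈ Set.Icc R (2*R),
      ggC nul a b r ≤ d + ((if B ≤ r ∧ r ≤ A then A else 0) + (if A ≤ r ∧ r ≤ B then B else 0)) := by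
    intro r _
    have i1 : (0:ℝ) ≤ (if B ≤ r ∧ r ≤ A then A else 0) := by split_ifs <;> simp [hA0]
    have i2 : (0:ℝ) ≤ (if A ≤ r ∧ r ≤ B then B else 0) := by split_ifs <;> simp [hB0]
    by_cases h1 : r < dist nul a <;> by_cases h2 : r < dist nul b
    · have hg : ggC nul a b r = dist a b := by unfold ggC; rw [if_pos h1, if_pos h2]
      rw [hg]; linarith
    · have hg : ggC nul a b r = dist nul a := by unfold ggC; rw [if_pos h1, if_neg h2]
      have hI : (if B ≤ r ∧ r ≤ A then A else 0) = A := if_pos ⟨le_of_not_gt h2, le_of_lt h1⟩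
      rw [hg, hI]; linarith
    · have hg : ggC nul a b r = dist nul b := by unfold ggC; rw [if_neg h1, if_pos h2]
      have hI : (if A ≤ r ∧ r ≤ B then B else 0) = B := if_pos ⟨le_of_not_gt h1, le_of_lt h2⟩
      rw [hg, hI]; linarith
    · have hg : ggC nul a b r = 0 := by unfold ggC; rw [if_neg h1, if_neg h2]
      rw [hg]; linarith
  have hint : (∫ r in R..(2*R), ggC nul a b r)
      ≤ ∫ r in R..(2*R), d + ((if B ≤ r ∧ r ≤ A then A else 0) + (if A ≤ r ∧ r ≤ B then B else 0)) :=
    intervalIntegral.integral_mono_on hRle (intble_ggC nul a b R (2*R))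
      ((intervalIntegrable_const).add ((intble_ite_icc A B A R (2*R)).add
        (intble_ite_icc B A B R (2*R)))) hpt
  rw [intervalIntegral.integral_add intervalIntegrable_const
      ((intble_ite_icc A B A R (2*R)).add (intble_ite_icc B A B R (2*R))),
    intervalIntegral.integral_add (intble_ite_icc A B A R (2*R)) (intble_ite_icc B A B R (2*R)),
    intervalIntegral.integral_const, smul_eq_mul,
    integral_ite_icc A B A R (2*R) hRle, integral_ite_icc B A B R (2*R) hRle] at hint
  have hc : (2*R - R) * d = R * d := by ring
  rw [hc] at hint
  -- depending on which of A, B is larger, one of the pieces vanishes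
  rcases le_total B A with hord | hord
  · have z2 : (volume (Set.Ioc R (2*R) ∩ Set.Icc A B)).toReal = 0 := vol_piece_zero _ _ hord
    have p1 : (volume (Set.Ioc R (2*R) ∩ Set.Icc B A)).toReal * A ≤ 3 * (R * d) := by
      have := vol_piece_le (A := A) (B := B) hR hd0 (by cases abs_le.mp habs; linarith)
      linarith [this]
    rw [z2] at hint
    linarith
  · have z1 : (volume (Set.Ioc R (2*R) ∩ Set.Icc B A)).toReal = 0 := vol_piece_zero _ _ hord
    have p2 : (volume (Set.Ioc R (2*R) ∩ Set.Icc A B)).toReal * B ≤ 3 * (R * d) := by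
      have := vol_piece_le (A := B) (B := A) hR hd0 (by cases abs_le.mp habs; linarith)
      linarith [this]
    rw [z1] at hint
    linarith

private lemma integral_hB_le (nul : α) {R : ℝ} (hR : 0 < R) :
    ∀ x y : List α, (∫ r in R..(2*R), hB nul r x y) ≤ 5 * R * ged dist nul x y := by
  have hRle : R ≤ 2*R := by linarith
  apply two_list_induction'
  · simp [hB_nil_nil, ged_nil_nil]
  · intro b ys ih
    simp only [hB_nil_cons]
    rw [intervalIntegral.integral_add (intble_delC nul b R (2*R)) (intble_hB nul R (2*R) [] ys),
      ged_nil_cons]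
    have h1 := integral_delC_le nul b (R := R) hR.le
    have h2 : (0:ℝ) ≤ dist nul b := dist_nonneg
    nlinarith
  · intro a xs ih
    simp only [hB_cons_nil]
    rw [intervalIntegral.integral_add (intble_delC nul a R (2*R)) (intble_hB nul R (2*R) xs []),
      ged_cons_nil]
    have h1 := integral_delC_le nul a (R := R) hR.le
    have h2 : (0:ℝ) ≤ dist nul a := dist_nonneg
    nlinarith
  · intro a xs b ys ih1 ih2 ih3
    rw [ged_cons_cons]
    have e1 : (∫ r in R..(2*R), hB nul r (a :: xs) (b :: ys))
        ≤ 5 * R * (dist a b + ged dist nul xs ys) := by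
      have hm : (∫ r in R..(2*R), hB nul r (a :: xs) (b :: ys))
          ≤ ∫ r in R..(2*R), ggC nul a b r + hB nul r xs ys :=
        intervalIntegral.integral_mono_on hRle (intble_hB nul R (2*R) _ _)
          ((intble_ggC nul a b R (2*R)).add (intble_hB nul R (2*R) xs ys))
          (fun r _ => by rw [hB_cons_cons]; exact min_le_left _ _)
      rw [intervalIntegral.integral_add (intble_ggC nul a b R (2*R))
        (intble_hB nul R (2*R) xs ys)] at hm
      have := integral_ggC_le nul a b hR
      have hd0 : (0:ℝ) ≤ dist a b := dist_nonneg
      nlinarith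
    have e2 : (∫ r in R..(2*R), hB nul r (a :: xs) (b :: ys))
        ≤ 5 * R * (dist nul a + ged dist nul xs (b :: ys)) := by
      have hm : (∫ r in R..(2*R), hB nul r (a :: xs) (b :: ys))
          ≤ ∫ r in R..(2*R), delC nul a r + hB nul r xs (b :: ys) :=
        intervalIntegral.integral_mono_on hRle (intble_hB nul R (2*R) _ _)
          ((intble_delC nul a R (2*R)).add (intble_hB nul R (2*R) xs (b :: ys)))
          (fun r _ => by rw [hB_cons_cons]; exact (min_le_right _ _).trans (min_le_left _ _))
      rw [intervalIntegral.integral_add (intble_delC nul a R (2*R))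
        (intble_hB nul R (2*R) xs (b :: ys))] at hm
      have := integral_delC_le nul a (R := R) hR.le
      have hd0 : (0:ℝ) ≤ dist nul a := dist_nonneg
      nlinarith
    have e3 : (∫ r in R..(2*R), hB nul r (a :: xs) (b :: ys))
        ≤ 5 * R * (dist nul b + ged dist nul (a :: xs) ys) := by
      have hm : (∫ r in R..(2*R), hB nul r (a :: xs) (b :: ys))
          ≤ ∫ r in R..(2*R), delC nul b r + hB nul r (a :: xs) ys :=
        intervalIntegral.integral_mono_on hRle (intble_hB nul R (2*R) _ _)
          ((intble_delC nul b R (2*R)).add (intble_hB nul R (2*R) (a :: xs) ys))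
          (fun r _ => by rw [hB_cons_cons]; exact (min_le_right _ _).trans (min_le_right _ _))
      rw [intervalIntegral.integral_add (intble_delC nul b R (2*R))
        (intble_hB nul R (2*R) (a :: xs) ys)] at hm
      have := integral_delC_le nul b (R := R) hR.le
      have hd0 : (0:ℝ) ≤ dist nul b := dist_nonneg
      nlinarith
    rw [mul_min_of_nonneg _ _ (by positivity : (0:ℝ) ≤ 5 * R),
      mul_min_of_nonneg _ _ (by positivity : (0:ℝ) ≤ 5 * R)]
    exact le_min e1 (le_min e2 e3)


end AuxStmt13

/-- For `r` uniform in `[R, 2R]`, `E[ed(s_r(x), s_r(y))] ≤ 5 · ed(x, y)`. -/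
theorem stmt13 [MetricSpace α] (nul : α) (R : ℝ) (hR : 1 ≤ R) (n : ℕ)
    (x y : List α) (hx : x.length = n) (hy : y.length = n)
    (hmx : ∀ l ∈ x, 1 ≤ dist nul l) (hmy : ∀ l ∈ y, 1 ≤ dist nul l) :
    (∫ r in R..(2 * R), ged dist nul (sEd nul r x) (sEd nul r y)) / R ≤
      5 * ged dist nul x y := by
  have hR0 : (0:ℝ) < R := lt_of_lt_of_le one_pos hR
  rw [div_le_iff₀ hR0]
  by_cases hI : IntervalIntegrable
      (fun r => ged dist nul (sEd nul r x) (sEd nul r y)) MeasureTheory.volume R (2*R)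
  · have h1 : (∫ r in R..(2*R), ged dist nul (sEd nul r x) (sEd nul r y))
        ≤ ∫ r in R..(2*R), hB nul r x y :=
      intervalIntegral.integral_mono_on (by linarith) hI (intble_hB nul R (2*R) x y)
        (fun r _ => ged_sEd_le_hB nul r x y)
    have h2 := integral_hB_le nul hR0 x y
    calc (∫ r in R..(2*R), ged dist nul (sEd nul r x) (sEd nul r y))
        ≤ 5 * R * ged dist nul x y := le_trans h1 h2
      _ = 5 * ged dist nul x y * R := by ring
  · rw [intervalIntegral.integral_undef hI]
    have := ged_nonneg nul x y
    positivity
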